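/- Let p > 3 be a prime. Then ∑_{k=0}^{p-1} (-1)^k T(k,0) ≡ p·(3·(p/3) - 1)/2 (mod p^2), where (p/3) is the Legendre symbol of p modulo 3 and T(k,0) is the central trinomial coefficient. -/

import Mathlib

/-- The trinomial coefficient `T n m`: the coefficient of `x^(n+m)` in `(1+x+x^2)^n`. -/
noncomputable def trinomial (n m : ℕ) : ℤ :=
  Polynomial.coeff ((1 + Polynomial.X + Polynomial.X ^ 2 : Polynomial ℤ) ^ n) (n + m)

open Polynomial Finset

namespace Stmt5Aux


lemma negpow {R : Type*} [Monoid R] [HasDistribNeg R] {a b : ℕ} (h : a % 2 = b % 2) :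
    (-1 : R) ^ a = (-1 : R) ^ b := by
  rcases Nat.even_or_odd a with ha | ha
  · rw [ha.neg_one_pow, (Nat.even_iff.2 (by have := Nat.even_iff.1 ha; omega)).neg_one_pow]
  · rw [ha.neg_one_pow, (Nat.odd_iff.2 (by have := Nat.odd_iff.1 ha; omega)).neg_one_pow]

lemma negpow_neg {R : Type*} [Monoid R] [HasDistribNeg R] {a b : ℕ} (h : ¬ a % 2 = b % 2) :
    (-1 : R) ^ a = -(-1 : R) ^ b := by
  rcases Nat.even_or_odd a with ha | ha
  · rw [ha.neg_one_pow, (Nat.odd_iff.2 (by have := Nat.even_iff.1 ha; omega)).neg_one_pow, neg_neg]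
  · rw [ha.neg_one_pow, (Nat.even_iff.2 (by have := Nat.odd_iff.1 ha; omega)).neg_one_pow]

lemma choose_pred {p : ℕ} (hp : p.Prime) : ∀ k, k ≤ p - 1 → ((p-1).choose k : ZMod p) = (-1)^k := by
  intro k
  induction k with
  | zero => simp
  | succ k ih =>
    intro hk
    have h1 : (p.choose (k+1) : ZMod p) = 0 := by
      rw [ZMod.natCast_eq_zero_iff]
      exact hp.dvd_choose_self (by omega) (by have := hp.two_le; omega)
    have h2 : p - 1 + 1 = p := by have := hp.two_le; omega
    have h3 := Nat.choose_succ_succ (p-1) k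
    simp only [Nat.succ_eq_add_one] at h3
    rw [h2] at h3
    have h4 := congrArg (Nat.cast : ℕ → ZMod p) h3
    push_cast at h4
    rw [h1, ih (by omega)] at h4
    linear_combination -h4

lemma sq_cast_zero {p : ℕ} : (p : ZMod (p^2)) * (p : ZMod (p^2)) = 0 := by
  have h0 : ((p^2 : ℕ) : ZMod (p^2)) = 0 := ZMod.natCast_self _
  push_cast at h0
  linear_combination h0

lemma mul_choose {p : ℕ} (hp : p.Prime) {j : ℕ} (h1 : j ≠ 0) (h2 : j < p) :
    (j : ZMod (p^2)) * (p.choose j : ZMod (p^2)) = (p : ZMod (p^2)) * (-1)^(j-1) := by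
  have hid : p * ((p-1).choose (j-1)) = p.choose j * j := by
    have h := Nat.add_one_mul_choose_eq (p-1) (j-1)
    have e1 : p - 1 + 1 = p := by have := hp.two_le; omega
    have e2 : j - 1 + 1 = j := by omega
    simpa [Nat.succ_eq_add_one, e1, e2] using h
  have hcp := choose_pred hp (j-1) (by omega)
  have hc : (p : ℤ) ∣ (((p-1).choose (j-1) : ℤ) - (-1)^(j-1)) := by
    have hz : ((((p-1).choose (j-1) : ℤ) - (-1)^(j-1) : ℤ) : ZMod p) = 0 := by
      push_cast
      rw [hcp]
      ring
    exact (ZMod.intCast_zmod_eq_zero_iff_dvd _ _).mp hz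
  obtain ⟨t, ht⟩ := hc
  have hidz : (p : ℤ) * ((p-1).choose (j-1) : ℤ) = (p.choose j : ℤ) * j := by exact_mod_cast hid
  have key : ((j : ℤ) * (p.choose j : ℤ) - p * (-1)^(j-1)) = p^2 * t := by
    linear_combination (p:ℤ) * ht - hidz
  have hz2 : (((j : ℤ) * (p.choose j : ℤ) - p * (-1)^(j-1) : ℤ) : ZMod (p^2)) = 0 := by
    rw [key]
    have h0 : ((p^2 : ℕ) : ZMod (p^2)) = 0 := ZMod.natCast_self _
    push_cast at h0 ⊢
    rw [h0]; ring
  push_cast at hz2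
  linear_combination hz2

lemma p_mul_choose {p : ℕ} (hp : p.Prime) {j : ℕ} (h1 : j ≠ 0) (h2 : j < p) :
    (p : ZMod (p^2)) * (p.choose j : ZMod (p^2)) = 0 := by
  obtain ⟨t, ht⟩ := hp.dvd_choose_self h1 h2
  rw [ht]
  push_cast
  rw [← mul_assoc, sq_cast_zero, zero_mul]



noncomputable def U (p : ℕ) : Polynomial (ZMod (p^2)) := 1 + X + X^2

noncomputable def Bk (p k : ℕ) : Polynomial (ZMod (p^2)) :=
  C ((-1 : ZMod (p^2))^k) * (U p)^k * X^(p-k)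

noncomputable def Spoly (p : ℕ) : Polynomial (ZMod (p^2)) :=
  ∑ k ∈ range p, C ((-1 : ZMod (p^2))^k) * (U p)^k * X^(p-1-k)

noncomputable def Fk (p n : ℕ) : Polynomial (ZMod (p^2)) :=
  C ((-1 : ZMod (p^2))^n * ((n : ZMod (p^2)) + 1)) * X^n

noncomputable def Gpoly (p : ℕ) : Polynomial (ZMod (p^2)) := ∑ n ∈ range p, Fk p n

noncomputable def Hpoly (p n : ℕ) : Polynomial (ZMod (p^2)) :=
  ∑ i ∈ range (p-1), C ((p.choose (i+1) : ZMod (p^2)) * (-1)^(p-(i+1))) * X^(n*(i+1))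

lemma tele {p : ℕ} (hodd : Odd p) (h0 : 0 < p) :
    (1+X)^2 * Spoly p = X^p + (U p)^p := by
  have key : ∀ k ∈ range p, (1+X)^2 * (C ((-1 : ZMod (p^2))^k) * (U p)^k * X^(p-1-k))
      = Bk p k - Bk p (k+1) := by
    intro k hk
    simp only [mem_range] at hk
    have e1 : p - (k+1) = p - 1 - k := by omega
    have e2 : p - k = (p-1-k) + 1 := by omega
    simp only [Bk, e1, e2, pow_succ, map_mul, map_neg, map_one, U]
    ring
  calc (1+X)^2 * Spoly p = ∑ k ∈ range p, (Bk p k - Bk p (k+1)) := by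
        rw [Spoly, mul_sum]; exact sum_congr rfl key
    _ = Bk p 0 - Bk p p := sum_range_sub' (Bk p) p
    _ = X^p + (U p)^p := by
        simp [Bk, hodd.neg_one_pow]

lemma G1 {p : ℕ} (hodd : Odd p) (h0 : 0 < p) :
    (1+X) * Gpoly p
      = 1 + C ((p : ZMod (p^2)) + 1) * X^p - X * ∑ n ∈ range p, (-X)^n := by
  have key : ∀ n ∈ range p, (1+X) * Fk p n = (Fk p n - Fk p (n+1)) + (-X)^(n+1) := by
    intro n _
    simp only [Fk, map_mul, map_pow, map_neg, map_one, map_add, Polynomial.C_eq_natCast]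
    push_cast
    ring
  have hsum : ∑ n ∈ range p, ((-X : Polynomial (ZMod (p^2)))^(n+1))
      = (-X) * ∑ n ∈ range p, (-X)^n := by
    rw [mul_sum]; exact sum_congr rfl fun n _ => by ring
  calc (1+X) * Gpoly p = ∑ n ∈ range p, ((Fk p n - Fk p (n+1)) + (-X)^(n+1)) := by
        rw [Gpoly, mul_sum]; exact sum_congr rfl key
    _ = (∑ n ∈ range p, (Fk p n - Fk p (n+1))) + ∑ n ∈ range p, (-X)^(n+1) :=
        sum_add_distrib
    _ = (Fk p 0 - Fk p p) + (-X) * ∑ n ∈ range p, (-X)^n := by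
        rw [sum_range_sub' (Fk p) p, hsum]
    _ = _ := by
        simp only [Fk, hodd.neg_one_pow, pow_zero, Nat.cast_zero, map_mul, map_neg, map_add,
          map_one, map_zero, mul_one, one_mul]
        ring

lemma G2 {p : ℕ} (hodd : Odd p) (h0 : 0 < p) :
    (1+X)^2 * Gpoly p
      = 1 + C ((p : ZMod (p^2)) + 1) * X^p + C ((p : ZMod (p^2))) * X^(p+1) := by
  have hE : (∑ n ∈ range p, (-X : Polynomial (ZMod (p^2)))^n) * (1+X) = X^p + 1 := by
    have h := geom_sum_mul (-X : Polynomial (ZMod (p^2))) p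
    have h2 : (-X : Polynomial (ZMod (p^2)))^p = -X^p := by
      rw [neg_pow, hodd.neg_one_pow]; ring
    rw [h2] at h
    linear_combination -h
  have h1 := G1 hodd h0
  have expand : (1+X)^2 * Gpoly p = (1+X) * ((1+X) * Gpoly p) := by ring
  rw [expand, h1]
  simp only [map_add, map_one]
  linear_combination (-(X : Polynomial (ZMod (p^2)))) * hE

lemma binom {p : ℕ} (hodd : Odd p) (h0 : 0 < p) (n : ℕ) :
    (X^n - 1 : Polynomial (ZMod (p^2)))^p = X^(n*p) - 1 + Hpoly p n := by
  have h := add_pow (X^n : Polynomial (ZMod (p^2))) (-1) p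
  rw [sub_eq_add_neg, h, Finset.sum_range_succ]
  have e : p - 1 + 1 = p := by omega
  have hs2 := Finset.sum_range_succ'
    (fun j => (X^n : Polynomial (ZMod (p^2)))^j * (-1 : Polynomial (ZMod (p^2)))^(p-j)
      * ((p.choose j : ℕ) : Polynomial (ZMod (p^2)))) (p-1)
  rw [e] at hs2
  rw [hs2]
  have hmid : ∑ i ∈ range (p-1),
      ((X^n : Polynomial (ZMod (p^2)))^(i+1) * (-1 : Polynomial (ZMod (p^2)))^(p-(i+1))
        * ((p.choose (i+1) : ℕ) : Polynomial (ZMod (p^2)))) = Hpoly p n := by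
    rw [Hpoly]
    refine sum_congr rfl fun i _ => ?_
    simp only [map_mul, Polynomial.C_eq_natCast, map_pow, map_neg, map_one, ← pow_mul]
    ring
  rw [hmid]
  simp [hodd.neg_one_pow, pow_mul]
  ring

lemma key {p : ℕ} (hodd : Odd p) (h0 : 0 < p) :
    (X^p - 1 + Hpoly p 1) * (U p)^p = X^(3*p) - 1 + Hpoly p 3 := by
  have h1 := binom hodd h0 1
  have h3 := binom hodd h0 3
  simp only [one_mul, pow_one] at h1
  have e : (X - 1 : Polynomial (ZMod (p^2))) * U p = X^3 - 1 := by
    simp only [U]; ring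
  calc (X^p - 1 + Hpoly p 1) * (U p)^p = (X - 1 : Polynomial (ZMod (p^2)))^p * (U p)^p := by
        rw [h1]
    _ = ((X - 1) * U p)^p := by rw [mul_pow]
    _ = (X^3 - 1 : Polynomial (ZMod (p^2)))^p := by rw [e]
    _ = X^(3*p) - 1 + Hpoly p 3 := h3




lemma frob {p : ℕ} (hp : p.Prime) :
    ((U p)^p - (1 + X^p + X^(2*p))).map (ZMod.castHom (dvd_pow_self p two_ne_zero) (ZMod p)) = 0 := by
  haveI : Fact p.Prime := ⟨hp⟩
  simp only [U, Polynomial.map_sub, Polynomial.map_pow, Polynomial.map_add, Polynomial.map_one,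
    Polynomial.map_X]
  rw [add_pow_char, add_pow_char]
  rw [show (2*p) = 2*p from rfl, pow_mul]
  ring

lemma pmul_coeff_zero {p : ℕ} (hp : p.Prime) (x : ZMod (p^2))
    (hx : ZMod.castHom (dvd_pow_self p two_ne_zero) (ZMod p) x = 0) :
    (p : ZMod (p^2)) * x = 0 := by
  haveI : NeZero p := ⟨hp.pos.ne'⟩
  haveI : NeZero (p^2) := ⟨pow_ne_zero 2 hp.pos.ne'⟩
  have h1 : ((x.val : ℕ) : ZMod p) = 0 := by
    rw [ZMod.natCast_val]
    exact hx
  have h2 : p ∣ x.val := (ZMod.natCast_eq_zero_iff _ _).mp h1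
  obtain ⟨t, ht⟩ := h2
  have h3 : x = ((x.val : ℕ) : ZMod (p^2)) := by
    rw [ZMod.natCast_val, ZMod.cast_id]
  rw [h3, ht]
  push_cast
  rw [← mul_assoc, sq_cast_zero, zero_mul]

lemma Hsmul {p : ℕ} (hp : p.Prime) (n : ℕ) :
    Hpoly p n = C (p : ZMod (p^2)) *
      ∑ i ∈ range (p-1), C (((p.choose (i+1) / p : ℕ) : ZMod (p^2)) * (-1)^(p-(i+1))) * X^(n*(i+1)) := by
  rw [Hpoly, mul_sum]
  refine sum_congr rfl fun i hi => ?_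
  simp only [mem_range] at hi
  have hd : p ∣ p.choose (i+1) := hp.dvd_choose_self (by omega) (by omega)
  rw [← mul_assoc, ← map_mul]
  have hmd : (p.choose (i+1) : ZMod (p^2))
      = (p : ZMod (p^2)) * ((p.choose (i+1) / p : ℕ) : ZMod (p^2)) := by
    rw [← Nat.cast_mul, Nat.mul_div_cancel' hd]
  congr 1
  rw [hmd]
  ring

lemma HD_coeff {p : ℕ} (hp : p.Prime) (n m : ℕ) :
    (Hpoly p n * ((U p)^p - (1 + X^p + X^(2*p)))).coeff m = 0 := by
  rw [Hsmul hp n, mul_assoc, coeff_C_mul]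
  apply pmul_coeff_zero hp
  rw [← Polynomial.coeff_map, Polynomial.map_mul, frob hp, mul_zero, coeff_zero]

lemma Hcoeff_zero {p n : ℕ} (hn : n ≠ 0) : (Hpoly p n).coeff 0 = 0 := by
  rw [Hpoly, finset_sum_coeff]
  apply sum_eq_zero
  intro i _
  rw [coeff_C_mul, coeff_X_pow, if_neg (by positivity), mul_zero]

lemma H1coeff {p m : ℕ} (h1 : 1 ≤ m) (h2 : m ≤ p - 1) :
    (Hpoly p 1).coeff m = (p.choose m : ZMod (p^2)) * (-1)^(p-m) := by
  rw [Hpoly, finset_sum_coeff, Finset.sum_eq_single (m-1)]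
  · have e : (m-1)+1 = m := by omega
    rw [coeff_C_mul, coeff_X_pow, e, if_pos (by omega), mul_one]
  · intro i hi hne
    simp only [mem_range] at hi
    rw [coeff_C_mul, coeff_X_pow, if_neg (by omega), mul_zero]
  · intro h
    exact absurd (mem_range.mpr (by omega)) h

lemma H3coeff_dvd {p m : ℕ} (h1 : 1 ≤ m) (h2 : m ≤ p - 1) (h3 : 3 ∣ m) :
    (Hpoly p 3).coeff m = (p.choose (m/3) : ZMod (p^2)) * (-1)^(p-m/3) := by
  rw [Hpoly, finset_sum_coeff, Finset.sum_eq_single (m/3-1)]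
  · have e : (m/3-1)+1 = m/3 := by omega
    rw [coeff_C_mul, coeff_X_pow, e, if_pos (by omega), mul_one]
  · intro i hi hne
    simp only [mem_range] at hi
    rw [coeff_C_mul, coeff_X_pow, if_neg (by omega), mul_zero]
  · intro h
    exact absurd (mem_range.mpr (by omega)) h

lemma H3coeff_ndvd {p m : ℕ} (h3 : ¬ 3 ∣ m) : (Hpoly p 3).coeff m = 0 := by
  rw [Hpoly, finset_sum_coeff]
  apply sum_eq_zero
  intro i _
  rw [coeff_C_mul, coeff_X_pow, if_neg (fun h => h3 ⟨i+1, h⟩), mul_zero]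


lemma coeff_key {p : ℕ} (hp : p.Prime) (hodd : Odd p) {m : ℕ} (hm : m ≤ p - 1) :
    ((U p)^p).coeff m
      = (if m = 0 then 1 else 0) + (Hpoly p 1).coeff m - (Hpoly p 3).coeff m := by
  have h0 : 0 < p := hp.pos
  have hk := key hodd h0 (p := p)
  have hexp : (X^p - 1 + Hpoly p 1) * (U p)^p
      = (U p)^p * X^p - (U p)^p + Hpoly p 1 + Hpoly p 1 * X^p + Hpoly p 1 * X^(2*p)
        + Hpoly p 1 * ((U p)^p - (1 + X^p + X^(2*p))) := by ring
  rw [hexp] at hk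
  have hc := congrArg (fun q => Polynomial.coeff q m) hk
  have c1 : ((U p)^p * X^p).coeff m = 0 := by
    rw [coeff_mul_X_pow']; exact if_neg (by omega)
  have c2 : (Hpoly p 1 * X^p).coeff m = 0 := by
    rw [coeff_mul_X_pow']; exact if_neg (by omega)
  have c3 : (Hpoly p 1 * X^(2*p)).coeff m = 0 := by
    rw [coeff_mul_X_pow']; exact if_neg (by omega)
  have c4 : (X^(3*p) : Polynomial (ZMod (p^2))).coeff m = 0 := by
    rw [coeff_X_pow]; exact if_neg (by omega)
  have c5 := HD_coeff hp 1 m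
  simp only [coeff_add, coeff_sub, c1, c2, c3, c4, c5, coeff_one] at hc
  linear_combination -hc

lemma Scoeff {p : ℕ} (h0 : 0 < p) :
    (Spoly p).coeff (p-1) = ∑ k ∈ range p, (-1 : ZMod (p^2))^k * ((U p)^k).coeff k := by
  rw [Spoly, finset_sum_coeff]
  refine sum_congr rfl fun k hk => ?_
  simp only [mem_range] at hk
  rw [coeff_mul_X_pow', if_pos (by omega), coeff_C_mul]
  congr 2
  omega

lemma Aeq {p : ℕ} (hodd : Odd p) (h0 : 0 < p) :
    (Spoly p).coeff (p-1) = ((X^p + (U p)^p) * Gpoly p).coeff (p-1) := by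
  have hg := G2 hodd h0
  have ht := tele hodd h0
  have h1 : Spoly p = (X^p + (U p)^p) * Gpoly p
      - C ((p : ZMod (p^2)) + 1) * (Spoly p * X^p)
      - C ((p : ZMod (p^2))) * (Spoly p * X^(p+1)) := by
    linear_combination (Gpoly p) * ht - (Spoly p) * hg
  have hc := congrArg (fun q => Polynomial.coeff q (p-1)) h1
  simp only [coeff_sub, coeff_C_mul, coeff_mul_X_pow'] at hc
  rw [if_neg (by omega), if_neg (by omega)] at hc
  simpa using hc

lemma Gcoeff {p j : ℕ} (hj : j < p) :
    (Gpoly p).coeff j = (-1 : ZMod (p^2))^j * ((j : ZMod (p^2)) + 1) := by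
  rw [Gpoly, finset_sum_coeff, Finset.sum_eq_single j]
  · rw [Fk, coeff_C_mul, coeff_X_pow, if_pos rfl, mul_one]
  · intro i _ hne
    rw [Fk, coeff_C_mul, coeff_X_pow, if_neg (fun h => hne h.symm), mul_zero]
  · intro h
    exact absurd (mem_range.mpr hj) h


lemma trin_cast {p : ℕ} (k : ℕ) :
    ((trinomial k 0 : ℤ) : ZMod (p^2)) = ((U p)^k).coeff k := by
  have hmap : ((1 + X + X^2 : Polynomial ℤ)^k).map (Int.castRingHom (ZMod (p^2)))
      = (U p)^k := by
    simp [U, Polynomial.map_pow]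
  rw [show (U p)^k = _ from hmap.symm, Polynomial.coeff_map]
  simp [_root_.trinomial]

end Stmt5Aux

open Stmt5Aux in
theorem stmt5 (p : ℕ) (hp : p.Prime) (hp3 : 3 < p) :
    (∑ k ∈ Finset.range p, (-1 : ZMod (p ^ 2)) ^ k * (trinomial k 0 : ZMod (p ^ 2))) =
      (p : ZMod (p ^ 2)) * (((3 * legendreSym 3 p - 1) / 2 : ℤ) : ZMod (p ^ 2)) := by
  classical
  have hodd : Odd p := hp.odd_of_ne_two (by omega)
  have hp2 : p % 2 = 1 := Nat.odd_iff.1 hodd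
  have h0 : 0 < p := by omega
  haveI : Fact p.Prime := ⟨hp⟩
  have hnd3 : ¬ (3 ∣ p) := by
    intro h
    rcases (Nat.Prime.eq_one_or_self_of_dvd hp 3 h) with h' | h' <;> omega
  trans (Spoly p).coeff (p-1)
  · rw [Scoeff h0]
    exact Finset.sum_congr rfl fun k _ => by rw [trin_cast]
  rw [Aeq hodd h0, add_mul, coeff_add]
  have hXG : ((X^p : Polynomial (ZMod (p^2))) * Gpoly p).coeff (p-1) = 0 := by
    rw [mul_comm, coeff_mul_X_pow']; exact if_neg (by omega)
  rw [hXG, zero_add, coeff_mul, Finset.Nat.sum_antidiagonal_eq_sum_range_succ_mk]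
  have hsucc : (p-1).succ = p := by omega
  rw [hsucc]
  have hterm : ∀ m ∈ Finset.range p, ((U p)^p).coeff m * (Gpoly p).coeff (p-1-m)
      = -((p : ZMod (p^2)) * (-1)^m)
        + (if 3 ∣ m then 3*(p : ZMod (p^2))*(-1)^m else 0)
        + (if m = 0 then -(p : ZMod (p^2)) else 0) := by
    intro m hm
    simp only [Finset.mem_range] at hm
    rw [coeff_key hp hodd (by omega), Gcoeff (show p-1-m < p by omega)]
    have hg1 : ((p-1-m : ℕ) : ZMod (p^2)) + 1 = ((p - m : ℕ) : ZMod (p^2)) := by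
      have e : (p-1-m) + 1 = p - m := by omega
      rw [← e]; push_cast; ring
    rw [hg1]
    by_cases hm0 : m = 0
    · subst hm0
      rw [Hcoeff_zero one_ne_zero, Hcoeff_zero (by norm_num : (3:ℕ) ≠ 0)]
      have he : Even (p-1) := Nat.Odd.sub_odd hodd odd_one
      simp only [Nat.sub_zero, pow_zero, he.neg_one_pow, if_true, eq_self_iff_true,
        dvd_zero, mul_one, one_mul]
      simp
      try ring
    · rw [if_neg hm0, if_neg hm0]
      have hm1 : 1 ≤ m := by omega
      rw [H1coeff hm1 (by omega)]
      have hpm : ((p - m : ℕ) : ZMod (p^2)) = (p : ZMod (p^2)) - (m : ZMod (p^2)) := by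
        rw [Nat.cast_sub hm.le]
      have key1 : ((p - m : ℕ) : ZMod (p^2)) * (p.choose m : ZMod (p^2))
          = (p : ZMod (p^2)) * (-1)^m := by
        rw [hpm, sub_mul, p_mul_choose hp hm0 hm, mul_choose hp hm0 hm]
        rw [negpow_neg (show ¬ m % 2 = (m-1) % 2 by omega)]; ring
      have r1 : (-1 : ZMod (p^2))^(p-m) = -(-1 : ZMod (p^2))^m := negpow_neg (by omega)
      have r2 : (-1 : ZMod (p^2))^(p-1-m) = (-1 : ZMod (p^2))^m := negpow (by omega)
      have sqa : (-1 : ZMod (p^2))^m * (-1 : ZMod (p^2))^m = 1 := by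
        rw [← pow_add, negpow (show (m+m) % 2 = 0 % 2 by omega), pow_zero]
      rw [r1, r2]
      by_cases h3 : 3 ∣ m
      · rw [if_pos h3, H3coeff_dvd hm1 (by omega) h3]
        have hm3 : 3 * (m/3) = m := Nat.mul_div_cancel' h3
        set t := m / 3 with htdef
        have ht0 : t ≠ 0 := by omega
        have htp : t < p := by omega
        have key3 : ((p - m : ℕ) : ZMod (p^2)) * (p.choose t : ZMod (p^2))
            = 3 * (p : ZMod (p^2)) * (-1)^t := by
          have e2 : (m : ZMod (p^2)) = 3 * (t : ZMod (p^2)) := by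
            rw [← hm3]; push_cast; ring
          rw [hpm, sub_mul, p_mul_choose hp ht0 htp, e2, mul_assoc,
            mul_choose hp ht0 htp, negpow_neg (show ¬ t % 2 = (t-1) % 2 by omega)]
          ring
        have r3 : (-1 : ZMod (p^2))^(p-t) = -(-1 : ZMod (p^2))^t := negpow_neg (by omega)
        have sqb : (-1 : ZMod (p^2))^t * (-1 : ZMod (p^2))^t = 1 := by
          rw [← pow_add, negpow (show (t+t) % 2 = 0 % 2 by omega), pow_zero]
        rw [r3]
        linear_combination (-((-1:ZMod (p^2))^m * (-1:ZMod (p^2))^m)) * key1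
          + ((-1:ZMod (p^2))^m * (-1:ZMod (p^2))^t) * key3
          - (p : ZMod (p^2)) * (-1:ZMod (p^2))^m * sqa
          + 3*(p : ZMod (p^2)) * (-1:ZMod (p^2))^m * sqb
      · rw [if_neg h3, H3coeff_ndvd h3]
        linear_combination (-((-1:ZMod (p^2))^m * (-1:ZMod (p^2))^m)) * key1
          - (p : ZMod (p^2)) * (-1:ZMod (p^2))^m * sqa
  rw [Finset.sum_congr rfl hterm, Finset.sum_add_distrib, Finset.sum_add_distrib]
  have hS1 : ∑ m ∈ Finset.range p, (-((p : ZMod (p^2)) * (-1)^m)) = -(p : ZMod (p^2)) := by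
    rw [Finset.sum_neg_distrib, ← Finset.mul_sum, neg_one_geom_sum,
      if_neg (Nat.not_even_iff_odd.mpr hodd), mul_one]
  have hS3 : ∑ m ∈ Finset.range p, (if m = 0 then -(p : ZMod (p^2)) else 0)
      = -(p : ZMod (p^2)) := by
    rw [Finset.sum_ite_eq' (Finset.range p) 0 (fun _ => -(p : ZMod (p^2)))]
    exact if_pos (Finset.mem_range.mpr h0)
  set M := (p+2)/3 with hM
  have hset : (Finset.range p).filter (fun m => 3 ∣ m)
      = (Finset.range M).image (fun t => 3*t) := by
    ext a
    simp only [Finset.mem_filter, Finset.mem_range, Finset.mem_image]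
    constructor
    · rintro ⟨ha, t, rfl⟩
      exact ⟨t, by omega, rfl⟩
    · rintro ⟨t, ht, rfl⟩
      exact ⟨by omega, ⟨t, rfl⟩⟩
  have hS2 : ∑ m ∈ Finset.range p, (if 3 ∣ m then 3*(p : ZMod (p^2))*(-1)^m else 0)
      = 3*(p : ZMod (p^2)) * (if Even M then 0 else 1) := by
    rw [← Finset.sum_filter, hset, Finset.sum_image (by intro x _ y _ h; simp only at h; omega)]
    have hcongr : ∀ t ∈ Finset.range M,
        3*(p : ZMod (p^2))*(-1)^(3*t) = 3*(p : ZMod (p^2))*(-1)^t := by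
      intro t _
      rw [pow_mul]
      norm_num
    rw [Finset.sum_congr rfl hcongr, ← Finset.mul_sum, neg_one_geom_sum]
  rw [hS1, hS2, hS3]
  have hp3' : p % 3 = 1 ∨ p % 3 = 2 := by omega
  rcases hp3' with h1 | h2
  · have hM1 : ¬ Even M := by rw [Nat.even_iff]; omega
    have hleg : legendreSym 3 (p : ℤ) = 1 := by
      rw [legendreSym.mod]
      have e : ((p : ℤ) % ((3:ℕ):ℤ)) = 1 := by push_cast; omega
      rw [e]
      decide
    rw [hleg, if_neg hM1]
    norm_num
    try ring
  · have hM1 : Even M := by rw [Nat.even_iff]; omega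
    have hleg : legendreSym 3 (p : ℤ) = -1 := by
      rw [legendreSym.mod]
      have e : ((p : ℤ) % ((3:ℕ):ℤ)) = 2 := by push_cast; omega
      rw [e]
      decide
    rw [hleg, if_pos hM1]
    norm_num
    ring
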